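/- arXiv:1302.2062 — 2 statements merged into one kernel-verified Lean document; each statement's English description precedes it below -/
import Mathlib

section
/- Let C be a triangulated category with shift functor Σ and M a rigid full subcategory, i.e. Hom_C(M, ΣM') = 0 for all M, M' ∈ M. Then the functor X ↦ Hom_C(−, X)|_M induces an equivalence (M ∗ ΣM)/ΣM ≃ mod M. -/
open CategoryTheory CategoryTheory.Limits CategoryTheory.Pretriangulated Opposite ZeroObject

universe v u v' u' v'' u''

/-- `f` factors through an object belonging to `B`. -/
def FactorsThru {A : Type u''} [Category.{v''} A] (B : Set A) {X Y : A} (f : X ⟶ Y) : Prop :=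
  ∃ (Z : A) (_ : Z ∈ B) (g : X ⟶ Z) (h : Z ⟶ Y), g ≫ h = f

variable {C : Type u} [Category.{v} C] [Preadditive C] [HasZeroObject C]

/-- The full subcategory on a set of objects. -/
abbrev Subcat (𝓜 : Set C) := ObjectProperty.FullSubcategory (fun X : C => X ∈ 𝓜)

/-- The functor `X ↦ Hom_C(−, X)|_𝓜`, the restricted preadditive Yoneda embedding. -/
def resYoneda (𝓜 : Set C) : C ⥤ ((Subcat 𝓜)ᵒᵖ ⥤ AddCommGrpCat.{v}) :=
  preadditiveYoneda ⋙
    (Functor.whiskeringLeft _ _ _).obj (ObjectProperty.ι (fun X : C => X ∈ 𝓜)).op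

/-- A contravariant additive functor `F` (an `M`-module) is finitely presented if it is
the cokernel of a morphism between representable functors, i.e. there are `A B : M`,
`h : A ⟶ B` and `π : Hom(−,B) ⟶ F` such that
`Hom(−,A) ⟶ Hom(−,B) ⟶ F ⟶ 0` is exact. -/
def FinPres {M : Type u'} [Category.{v'} M] [Preadditive M]
    (F : Mᵒᵖ ⥤ AddCommGrpCat.{v'}) : Prop :=
  ∃ (A B : M) (h : A ⟶ B) (π : preadditiveYoneda.obj B ⟶ F),
    (∀ m : M, Function.Surjective (π.app (op m))) ∧
    (∀ (m : M) (x : (preadditiveYoneda.obj B).obj (op m)),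
      π.app (op m) x = 0 ↔ ∃ y, (preadditiveYoneda.map h).app (op m) y = x)

/-- `mod M`: the category of finitely presented contravariant additive functors
`M → Ab`. -/
abbrev ModCat (M : Type u') [Category.{v'} M] [Preadditive M] :=
  ObjectProperty.FullSubcategory (fun F : Mᵒᵖ ⥤ AddCommGrpCat.{v'} => F.Additive ∧ FinPres F)

variable [HasShift C ℤ] [∀ n : ℤ, (shiftFunctor C n).Additive] [Pretriangulated C]

variable (𝓜 : Set C)

/-- The subcategory `𝓜 ∗ Σ𝓜` of objects `X` fitting in a distinguished triangle
`M0 ⟶ M1 ⟶ X ⟶ M0⟦1⟧` with `M0, M1 ∈ 𝓜`. -/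
def star : Set C :=
  {X | ∃ M0 M1 : C, M0 ∈ 𝓜 ∧ M1 ∈ 𝓜 ∧
    ∃ (f : M0 ⟶ M1) (g : M1 ⟶ X) (h : X ⟶ M0⟦(1 : ℤ)⟧),
      Triangle.mk f g h ∈ distTriang C}

/-- The hom relation on `𝓜 ∗ Σ𝓜` identifying morphisms whose difference factors
through an object of `Σ𝓜`; its quotient is `(𝓜 ∗ Σ𝓜)/Σ𝓜`. -/
def starRel : HomRel (Subcat (star 𝓜)) :=
  fun {X Y} (f g : X ⟶ Y) =>
    FactorsThru ((shiftFunctor C (1 : ℤ)).obj '' 𝓜) (X := X.obj) (Y := Y.obj) (f - g).hom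


section IYAux

variable {𝓜 : Set C}

/-- View a morphism of a full subcategory as a morphism of the ambient category. -/
abbrev homOf {𝓝 : Set C} {X Y : Subcat 𝓝} (f : X ⟶ Y) : X.obj ⟶ Y.obj := f.hom

/-- Postcomposition natural transformation. -/
def resApp {B : Subcat 𝓜} {X : C} (g : B.obj ⟶ X) :
    preadditiveYoneda.obj B ⟶ (resYoneda 𝓜).obj X where
  app m := AddCommGrpCat.ofHom
    { toFun := fun x => (x : m.unop ⟶ B).hom ≫ g
      map_zero' := Limits.zero_comp
      map_add' := fun _ _ => Preadditive.add_comp _ _ _ _ _ _ }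
  naturality m m' φ := AddCommGrpCat.ext fun x => by
    show (homOf φ.unop ≫ (x : m.unop ⟶ B).hom) ≫ g =
      homOf φ.unop ≫ ((x : m.unop ⟶ B).hom ≫ g)
    rw [Category.assoc]

theorem resYoneda_mem
    (rigid : ∀ ⦃m m' : C⦄, m ∈ 𝓜 → m' ∈ 𝓜 → ∀ φ : m ⟶ m'⟦(1 : ℤ)⟧, φ = 0)
    {X : C} (hX : X ∈ _root_.star 𝓜) :
    ((resYoneda 𝓜).obj X).Additive ∧ FinPres ((resYoneda 𝓜).obj X) := by
  obtain ⟨M0, M1, hM0, hM1, f, g, h, hT⟩ := hX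
  refine ⟨inferInstanceAs ((ObjectProperty.ι (fun X : C => X ∈ 𝓜)).op ⋙
      preadditiveYoneda.obj X).Additive, ?_⟩
  refine ⟨⟨M0, hM0⟩, ⟨M1, hM1⟩, ObjectProperty.homMk f, resApp g, ?_, ?_⟩
  · intro m x
    obtain ⟨y, hy⟩ := Triangle.coyoneda_exact₃ _ hT
      (x : m.obj ⟶ X) (rigid m.property hM0 _)
    exact ⟨ObjectProperty.homMk y, hy.symm⟩
  · intro m x
    constructor
    · intro hx
      obtain ⟨y, hy⟩ := Triangle.coyoneda_exact₂ _ hT (x : m ⟶ ⟨M1, hM1⟩).hom hx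
      exact ⟨ObjectProperty.homMk y, by
        change ObjectProperty.homMk y ≫
          (ObjectProperty.homMk f : (⟨M0, hM0⟩ : Subcat 𝓜) ⟶ ⟨M1, hM1⟩) = x
        exact InducedCategory.hom_ext hy.symm⟩
    · rintro ⟨y, rfl⟩
      have h2 : f ≫ g = 0 := comp_distTriang_mor_zero₁₂ _ hT
      have h3 : ∀ w : m.obj ⟶ M0, (w ≫ f) ≫ g = 0 := fun w => by
        rw [Category.assoc, h2, Limits.comp_zero]
      exact h3 y.hom

/-- The functor `𝓜 ∗ Σ𝓜 ⥤ mod 𝓜`. -/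
def modF (𝓜 : Set C)
    (rigid : ∀ ⦃m m' : C⦄, m ∈ 𝓜 → m' ∈ 𝓜 → ∀ φ : m ⟶ m'⟦(1 : ℤ)⟧, φ = 0) :
    Subcat (_root_.star 𝓜) ⥤ ModCat (Subcat 𝓜) :=
  ObjectProperty.lift _ (ObjectProperty.ι _ ⋙ resYoneda 𝓜)
    (fun X => resYoneda_mem rigid X.property)

variable (rigid : ∀ ⦃m m' : C⦄, m ∈ 𝓜 → m' ∈ 𝓜 → ∀ φ : m ⟶ m'⟦(1 : ℤ)⟧, φ = 0)

theorem starRel_of_pointwise {X Y : Subcat (_root_.star 𝓜)} (f g : X ⟶ Y)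
    (hfg : ∀ (m : Subcat 𝓜) (x : m.obj ⟶ X.obj), x ≫ homOf f = x ≫ homOf g) :
    starRel 𝓜 f g := by
  obtain ⟨M0, M1, hM0, hM1, f₀, g₀, h₀, hT⟩ := X.property
  have hg : g₀ ≫ homOf (f - g) = 0 := by
    have h1 := hfg ⟨M1, hM1⟩ g₀
    show g₀ ≫ (homOf f - homOf g) = 0
    rw [Preadditive.comp_sub, h1, sub_self]
  obtain ⟨k, hk⟩ := Triangle.yoneda_exact₃ _ hT _ hg
  exact ⟨M0⟦(1 : ℤ)⟧, ⟨M0, hM0, rfl⟩, h₀, k, hk.symm⟩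

theorem modF_map_eq_of_starRel {X Y : Subcat (_root_.star 𝓜)} (f g : X ⟶ Y)
    (hr : starRel 𝓜 f g) : (modF 𝓜 rigid).map f = (modF 𝓜 rigid).map g := by
  obtain ⟨Z, ⟨z, hz, rfl⟩, a, b, hab⟩ := hr
  apply ObjectProperty.hom_ext
  apply NatTrans.ext
  funext m
  refine AddCommGrpCat.ext fun (x : m.unop.obj ⟶ X.obj) => ?_
  show (x : m.unop.obj ⟶ X.obj) ≫ homOf f = (x : m.unop.obj ⟶ X.obj) ≫ homOf g
  have h1 : (x : m.unop.obj ⟶ X.obj) ≫ a = 0 := rigid m.unop.property hz _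
  have h2 : (x : m.unop.obj ⟶ X.obj) ≫ (homOf f - homOf g) = 0 := by
    have : homOf f - homOf g = a ≫ b := by rw [hab]; rfl
    rw [this, ← Category.assoc, h1, Limits.zero_comp]
  rw [Preadditive.comp_sub, sub_eq_zero] at h2
  exact h2

theorem modF_full {X Y : Subcat (_root_.star 𝓜)}
    (η : (modF 𝓜 rigid).obj X ⟶ (modF 𝓜 rigid).obj Y) :
    ∃ ψ : X ⟶ Y, (modF 𝓜 rigid).map ψ = η := by
  obtain ⟨M0, M1, hM0, hM1, f₀, g₀, h₀, hTX⟩ : ∃ M0 M1 : C, M0 ∈ 𝓜 ∧ M1 ∈ 𝓜 ∧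
      ∃ (f : M0 ⟶ M1) (g : M1 ⟶ X.obj) (h : X.obj ⟶ M0⟦(1 : ℤ)⟧),
        Triangle.mk f g h ∈ distTriang C := X.property
  obtain ⟨N0, N1, hN0, hN1, f₁, g₁, h₁, hTY⟩ : ∃ M0 M1 : C, M0 ∈ 𝓜 ∧ M1 ∈ 𝓜 ∧
      ∃ (f : M0 ⟶ M1) (g : M1 ⟶ Y.obj) (h : Y.obj ⟶ M0⟦(1 : ℤ)⟧),
        Triangle.mk f g h ∈ distTriang C := Y.property
  have ηnat : ∀ (m m' : Subcat 𝓜) (φ : m' ⟶ m) (x : m.obj ⟶ X.obj),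
      η.hom.app (op m') (homOf φ ≫ x) = homOf φ ≫ η.hom.app (op m) x := by
    intro m m' φ x
    have h1 := ConcreteCategory.congr_hom (η.hom.naturality φ.op) x
    exact h1
  set β₁ : M1 ⟶ Y.obj := η.hom.app (op ⟨M1, hM1⟩) g₀ with hβ₁
  obtain ⟨β, hβ⟩ := Triangle.coyoneda_exact₃ _ hTY β₁ (rigid hM1 hN0 _)
  simp only [Triangle.mk_obj₂, Triangle.mk_mor₂] at hβ
  have hz : f₀ ≫ β₁ = 0 := by
    have hn : η.hom.app (op (⟨M0, hM0⟩ : Subcat 𝓜)) (f₀ ≫ g₀) =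
        f₀ ≫ η.hom.app (op ⟨M1, hM1⟩) g₀ :=
      ηnat ⟨M1, hM1⟩ ⟨M0, hM0⟩ (ObjectProperty.homMk f₀) g₀
    have hfg : f₀ ≫ g₀ = 0 :=
      comp_distTriang_mor_zero₁₂ _ hTX
    have h0 : η.hom.app (op (⟨M0, hM0⟩ : Subcat 𝓜)) 0 = 0 := by simp
    rw [hβ₁, ← hn, hfg]
    exact h0
  have h1 : (f₀ ≫ β) ≫ g₁ = 0 := (Category.assoc _ _ _).trans ((congrArg (f₀ ≫ ·) hβ.symm).trans hz)
  obtain ⟨α, hα⟩ := Triangle.coyoneda_exact₂ _ hTY (f₀ ≫ β) h1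
  simp only [Triangle.mk_obj₁, Triangle.mk_mor₁] at hα
  obtain ⟨ψ, hψ₁, _⟩ := Pretriangulated.complete_distinguished_triangle_morphism
    (Triangle.mk f₀ g₀ h₀) (Triangle.mk f₁ g₁ h₁) hTX hTY α β hα
  simp only [Triangle.mk_obj₂, Triangle.mk_obj₃, Triangle.mk_mor₂] at hψ₁
  refine ⟨ObjectProperty.homMk ψ, ?_⟩
  apply ObjectProperty.hom_ext
  apply NatTrans.ext
  funext m
  refine AddCommGrpCat.ext fun (x : m.unop.obj ⟶ X.obj) => ?_
  obtain ⟨x', hx'⟩ := Triangle.coyoneda_exact₃ _ hTX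
    (x : m.unop.obj ⟶ X.obj) (rigid m.unop.property hM0 _)
  simp only [Triangle.mk_obj₂, Triangle.mk_mor₂] at hx'
  show (x : m.unop.obj ⟶ X.obj) ≫ ψ = η.hom.app m x
  have hn : η.hom.app m (x' ≫ g₀) = x' ≫ η.hom.app (op ⟨M1, hM1⟩) g₀ :=
    ηnat ⟨M1, hM1⟩ m.unop (ObjectProperty.homMk x') g₀
  rw [hx']
  refine (Category.assoc _ _ _).trans ?_
  refine (congrArg (x' ≫ ·) (hψ₁.trans hβ.symm)).trans ?_
  exact hn.symm

theorem modF_essSurj (F : ModCat (Subcat 𝓜)) :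
    ∃ (Z : Subcat (_root_.star 𝓜)), Nonempty ((modF 𝓜 rigid).obj Z ≅ F) := by
  obtain ⟨hadd, A, B, h, π, hsurj, hker⟩ := F.property
  obtain ⟨X, g, k, hT⟩ := Pretriangulated.distinguished_cocone_triangle (homOf h)
  have hX : X ∈ _root_.star 𝓜 := ⟨A.obj, B.obj, A.property, B.property, homOf h, g, k, hT⟩
  have lift : ∀ (m : (Subcat 𝓜)ᵒᵖ) (x : m.unop.obj ⟶ X),
      ∃ y : m.unop.obj ⟶ B.obj, y ≫ g = x := by
    intro m x
    obtain ⟨y, hy⟩ := Triangle.coyoneda_exact₃ _ hT x (rigid m.unop.property A.property _)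
    exact ⟨y, hy.symm⟩
  have key : ∀ (m : (Subcat 𝓜)ᵒᵖ) (y y' : m.unop.obj ⟶ B.obj), y ≫ g = y' ≫ g →
      π.app m (ObjectProperty.homMk y : m.unop ⟶ B) = π.app m (ObjectProperty.homMk y' : m.unop ⟶ B) := by
    intro m y y' hyy
    have hsub : (y - y') ≫ g = 0 := by rw [Preadditive.sub_comp, hyy, sub_self]
    obtain ⟨z, hz⟩ := Triangle.coyoneda_exact₂ _ hT (y - y') hsub
    simp only [Triangle.mk_obj₁, Triangle.mk_mor₁] at hz
    have h0 : π.app m (ObjectProperty.homMk (y - y' : m.unop.obj ⟶ B.obj) : m.unop ⟶ B) = 0 :=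
      (hker m.unop _).mpr ⟨ObjectProperty.homMk z, by
        change (ObjectProperty.homMk z : m.unop ⟶ A) ≫ h = ObjectProperty.homMk (y - y')
        exact InducedCategory.hom_ext hz.symm⟩
    have hms : π.app m (ObjectProperty.homMk (y - y' : m.unop.obj ⟶ B.obj) : m.unop ⟶ B) =
        π.app m (ObjectProperty.homMk y : m.unop ⟶ B) - π.app m (ObjectProperty.homMk y' : m.unop ⟶ B) :=
      AddMonoidHom.map_sub
        (show ((preadditiveYoneda.obj B).obj m : Type _) →+ (F.obj.obj m : Type _)
          from (π.app m).hom) _ _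
    rw [hms] at h0
    exact sub_eq_zero.mp h0
  let θ : (resYoneda 𝓜).obj X ⟶ F.obj := {
    app := fun m => AddCommGrpCat.ofHom
      { toFun := fun x => π.app m (ObjectProperty.homMk (lift m x).choose : m.unop ⟶ B)
        map_zero' := by
          have h1 := key m (lift m 0).choose 0
            (by rw [(lift m 0).choose_spec, Limits.zero_comp])
          have h2 : π.app m (ObjectProperty.homMk (0 : m.unop.obj ⟶ B.obj) : m.unop ⟶ B) = 0 :=
            map_zero (ConcreteCategory.hom (π.app m))
          exact h1.trans h2
        map_add' := by
          intro x y
          have h1 := key m (lift m (x + y)).choose ((lift m x).choose + (lift m y).choose)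
            (by rw [(lift m (x + y)).choose_spec, Preadditive.add_comp,
              (lift m x).choose_spec, (lift m y).choose_spec]; rfl)
          have h2 := AddMonoidHom.map_add
            (show ((preadditiveYoneda.obj B).obj m : Type _) →+ (F.obj.obj m : Type _)
              from (π.app m).hom)
            (ObjectProperty.homMk (lift m x).choose : m.unop ⟶ B) (ObjectProperty.homMk (lift m y).choose : m.unop ⟶ B)
          exact h1.trans h2 }
    naturality := by
      intro m m' φ
      refine AddCommGrpCat.ext fun x => ?_
      have harg : (homOf φ.unop ≫ (lift m x).choose) ≫ g =
          homOf φ.unop ≫ (x : m.unop.obj ⟶ X) := by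
        rw [Category.assoc, (lift m x).choose_spec]
      have h1 := key m' (lift m' (homOf φ.unop ≫ (x : m.unop.obj ⟶ X))).choose
        (homOf φ.unop ≫ (lift m x).choose)
        (((lift m' (homOf φ.unop ≫ (x : m.unop.obj ⟶ X))).choose_spec).trans harg.symm)
      have h2 := ConcreteCategory.congr_hom (π.naturality φ) (ObjectProperty.homMk (lift m x).choose : m.unop ⟶ B)
      exact h1.trans h2 }
  have hbij : ∀ m, Function.Bijective (θ.app m) := by
    intro m
    constructor
    · intro (x : m.unop.obj ⟶ X) (y : m.unop.obj ⟶ X) hxy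
      have h0 : π.app m (ObjectProperty.homMk ((lift m x).choose - (lift m y).choose : m.unop.obj ⟶ B.obj) :
          m.unop ⟶ B) = 0 := by
        have hms : π.app m (ObjectProperty.homMk ((lift m x).choose - (lift m y).choose :
            m.unop.obj ⟶ B.obj) : m.unop ⟶ B) =
            π.app m ((ObjectProperty.homMk (lift m x).choose : m.unop ⟶ B)) -
              π.app m ((ObjectProperty.homMk (lift m y).choose : m.unop ⟶ B)) :=
          AddMonoidHom.map_sub
            (show ((preadditiveYoneda.obj B).obj m : Type _) →+ (F.obj.obj m : Type _)
              from (π.app m).hom) (ObjectProperty.homMk (lift m x).choose)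
              (ObjectProperty.homMk (lift m y).choose)
        have hxy' : π.app m ((ObjectProperty.homMk (lift m x).choose : m.unop ⟶ B)) =
            π.app m ((ObjectProperty.homMk (lift m y).choose : m.unop ⟶ B)) := hxy
        rw [hms, hxy', sub_self]
      obtain ⟨w, hw⟩ := (hker m.unop _).mp h0
      have hw' : homOf w ≫ homOf h = (lift m x).choose - (lift m y).choose :=
        congrArg InducedCategory.Hom.hom hw
      have hcz : homOf h ≫ g = 0 := comp_distTriang_mor_zero₁₂ _ hT
      have : (x : m.unop.obj ⟶ X) - (y : m.unop.obj ⟶ X) = 0 := by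
        rw [← (lift m x).choose_spec, ← (lift m y).choose_spec, ← Preadditive.sub_comp,
          ← hw', Category.assoc, hcz, Limits.comp_zero]
      exact sub_eq_zero.mp this
    · intro z
      obtain ⟨b, hb⟩ := hsurj m.unop z
      refine ⟨(b : m.unop ⟶ B).hom ≫ g, ?_⟩
      have h1 := key m (lift m ((b : m.unop ⟶ B).hom ≫ g)).choose
        (b : m.unop ⟶ B).hom
        ((lift m ((b : m.unop ⟶ B).hom ≫ g)).choose_spec)
      exact h1.trans hb
  haveI : ∀ m, IsIso (θ.app m) := fun m => by
    rw [CategoryTheory.ConcreteCategory.isIso_iff_bijective]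
    exact hbij m
  have hiso : IsIso θ := NatIso.isIso_of_isIso_app θ
  let e := @asIso _ _ _ _ θ hiso
  refine ⟨⟨X, hX⟩, ⟨?_⟩⟩
  exact ObjectProperty.isoMk _ e

end IYAux


/-- **Iyama–Yoshino.** Let `C` be a triangulated category and `𝓜` a
rigid full subcategory.  Then `X ↦ Hom_C(−,X)|_𝓜` induces an equivalence
`(𝓜 ∗ Σ𝓜)/Σ𝓜 ≌ mod 𝓜`. -/
theorem stmt8 [IsTriangulated C]
    (rigid : ∀ ⦃m m' : C⦄, m ∈ 𝓜 → m' ∈ 𝓜 → ∀ φ : m ⟶ m'⟦(1 : ℤ)⟧, φ = 0) :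
    ∃ E : CategoryTheory.Quotient (starRel 𝓜) ⥤ ModCat (Subcat 𝓜),
      E.IsEquivalence ∧
      Nonempty (Quotient.functor (starRel 𝓜) ⋙ E ⋙ ObjectProperty.ι _ ≅
        ObjectProperty.ι _ ⋙ resYoneda 𝓜) := by
  refine ⟨CategoryTheory.Quotient.lift _ (modF 𝓜 rigid)
    (fun X Y f g hr => modF_map_eq_of_starRel rigid f g hr), ?_, ?_⟩
  · constructor
    · -- Faithful
      refine ⟨fun {X Y} {f g} hfg => ?_⟩
      obtain ⟨f', rfl⟩ := (CategoryTheory.Quotient.functor (starRel 𝓜)).map_surjective f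
      obtain ⟨g', rfl⟩ := (CategoryTheory.Quotient.functor (starRel 𝓜)).map_surjective g
      rw [CategoryTheory.Quotient.lift_map_functor_map, CategoryTheory.Quotient.lift_map_functor_map] at hfg
      refine CategoryTheory.Quotient.sound _ (starRel_of_pointwise f' g' fun m x => ?_)
      exact ConcreteCategory.congr_hom (congrArg (fun p => NatTrans.app p.hom (op m)) hfg) x
    · -- Full
      refine ⟨fun {X Y} f => ?_⟩
      obtain ⟨ψ, hψ⟩ := modF_full rigid (X := X.as) (Y := Y.as) f
      exact ⟨(Quotient.functor _).map ψ, by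
        rw [CategoryTheory.Quotient.lift_map_functor_map]; exact hψ⟩
    · -- EssSurj
      refine ⟨fun F => ?_⟩
      obtain ⟨Z, ⟨e⟩⟩ := modF_essSurj rigid F
      exact ⟨(Quotient.functor _).obj Z, ⟨e⟩⟩
  · exact ⟨eqToIso (by
      rw [← Functor.assoc, CategoryTheory.Quotient.lift_spec]
      rfl)⟩
end

section
/- Let C be a left triangulated category with loop functor Ω, and M a rigid subcategory satisfying: (LC1) Ω restricted to M is fully faithful; (LC2) for any left triangle ΩM1 →f X →g M0 → M1 with M0, M1 ∈ M, any object Y ∈ ΩM ∗ M, and any morphism t: X → Y with tf = 0, t factors through g. Then the functor X ↦ Hom_C(Ω(−), X)|_M induces an equivalence (ΩM ∗ M)/M ≃ mod M. -/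
open CategoryTheory CategoryTheory.Limits Opposite ZeroObject

universe v u

/-- A left triangulated category `(C, Ω, ◁)`: an additive category with an additive
loop endofunctor `Ω` and a class of left triangles `ΩZ ⟶ X ⟶ Y ⟶ Z` satisfying the
axioms (LTR0)–(LTR4), dual to the right triangulated axioms. -/
structure LeftTriangulated (C : Type u) [Category.{v} C] [Preadditive C]
    [HasZeroObject C] where
  /-- the loop (shift) functor `Ω` -/
  loop : C ⥤ C
  loop_additive : loop.Additive
  /-- the class of left triangles -/
  IsTri : ∀ ⦃X Y Z : C⦄, (loop.obj Z ⟶ X) → (X ⟶ Y) → (Y ⟶ Z) → Prop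
  /-- (LTR0): left triangles are closed under isomorphism of sequences -/
  ltr0 : ∀ ⦃X Y Z X' Y' Z' : C⦄ (x : loop.obj Z ⟶ X) (y : X ⟶ Y) (z : Y ⟶ Z)
      (x' : loop.obj Z' ⟶ X') (y' : X' ⟶ Y') (z' : Y' ⟶ Z')
      (f : X ≅ X') (g : Y ≅ Y') (h : Z ≅ Z'),
      IsTri x y z → x ≫ f.hom = loop.map h.hom ≫ x' → y ≫ g.hom = f.hom ≫ y' →
      z ≫ h.hom = g.hom ≫ z' → IsTri x' y' z'
  /-- (LTR1a): `Ω0 ⟶ X = X ⟶ 0` is a left triangle -/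
  ltr1_id : ∀ X : C, IsTri (0 : loop.obj (0 : C) ⟶ X) (𝟙 X) 0
  /-- (LTR1b): every morphism embeds in a left triangle -/
  ltr1_ex : ∀ ⦃Y Z : C⦄ (z : Y ⟶ Z), ∃ (X : C) (x : loop.obj Z ⟶ X) (y : X ⟶ Y),
      IsTri x y z
  /-- (LTR2): rotation -/
  ltr2 : ∀ ⦃X Y Z : C⦄ (x : loop.obj Z ⟶ X) (y : X ⟶ Y) (z : Y ⟶ Z),
      IsTri x y z → IsTri (-loop.map z) x y
  /-- (LTR3): morphisms of left triangles -/
  ltr3 : ∀ ⦃X Y Z X' Y' Z' : C⦄ (x : loop.obj Z ⟶ X) (y : X ⟶ Y) (z : Y ⟶ Z)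
      (x' : loop.obj Z' ⟶ X') (y' : X' ⟶ Y') (z' : Y' ⟶ Z')
      (g : Y ⟶ Y') (h : Z ⟶ Z'), IsTri x y z → IsTri x' y' z' →
      z ≫ h = g ≫ z' →
      ∃ f : X ⟶ X', x ≫ f = loop.map h ≫ x' ∧ y ≫ g = f ≫ y'
  /-- (LTR4): the octahedron axiom -/
  ltr4 : ∀ ⦃X Y Z Y'' Z' : C⦄ (x : loop.obj Z ⟶ X) (y : X ⟶ Y) (z : Y ⟶ Z)
      (x' : loop.obj Z' ⟶ Y'') (y' : Y'' ⟶ Z) (z' : Z ⟶ Z'),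
      IsTri x y z → IsTri x' y' z' →
      ∃ (X' : C) (u : loop.obj Z' ⟶ X') (v : X' ⟶ Y) (g : X ⟶ X') (h : X' ⟶ Y''),
        IsTri u v (z ≫ z') ∧ IsTri (loop.map y' ≫ x) g h ∧
        g ≫ v = y ∧ u ≫ h = x' ∧ h ≫ y' = v ≫ z
universe v' u' v'' u''

variable {C : Type u} [Category.{v} C] [Preadditive C] [HasZeroObject C]

/-- The functor `X ↦ Hom_C(Ω(−), X)|_𝓜`. -/
def loopResYoneda (T : LeftTriangulated C) (𝓜 : Set C) :
    C ⥤ ((Subcat 𝓜)ᵒᵖ ⥤ AddCommGrpCat.{v}) :=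
  preadditiveYoneda ⋙
    (Functor.whiskeringLeft _ _ _).obj (ObjectProperty.ι (fun X : C => X ∈ 𝓜) ⋙ T.loop).op

/-- The natural transformation `Hom_𝓜(−, M1) ⟶ Hom_C(Ω(−), X)|_𝓜` induced by
`f : ΩM1 ⟶ X`, sending `a : m ⟶ M1` to `Ωa ≫ f`. -/
def presMap (T : LeftTriangulated C) (𝓜 : Set C) {M1 X : C} (f : T.loop.obj M1 ⟶ X) :
    (resYoneda 𝓜).obj M1 ⟶ (loopResYoneda T 𝓜).obj X where
  app m := AddCommGrpCat.ofHom
    (AddMonoidHom.mk' (fun (a : m.unop.obj ⟶ M1) => (T.loop.map a ≫ f : T.loop.obj m.unop.obj ⟶ X))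
      (by
        haveI := T.loop_additive
        intro (a : m.unop.obj ⟶ M1) (b : m.unop.obj ⟶ M1)
        show T.loop.map (a + b) ≫ f = T.loop.map a ≫ f + T.loop.map b ≫ f
        rw [Functor.map_add, Preadditive.add_comp]))
  naturality := by
    intro m m' φ
    ext a
    change m.unop.obj ⟶ M1 at a
    show T.loop.map ((φ.unop.hom : m'.unop.obj ⟶ m.unop.obj) ≫ a) ≫ f =
      T.loop.map (φ.unop.hom : m'.unop.obj ⟶ m.unop.obj) ≫ T.loop.map a ≫ f
    rw [Functor.map_comp, Category.assoc]


variable (T : LeftTriangulated C) (𝓜 : Set C)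

/-- The subcategory `Ω𝓜 ∗ 𝓜` of objects `X` admitting a left triangle
`ΩM1 ⟶ X ⟶ M0 ⟶ M1` with `M0, M1 ∈ 𝓜`. -/
def OmegaStar : Set C :=
  {X | ∃ M0 M1 : C, M0 ∈ 𝓜 ∧ M1 ∈ 𝓜 ∧
    ∃ (f : T.loop.obj M1 ⟶ X) (g : X ⟶ M0) (h : M0 ⟶ M1), T.IsTri f g h}

/-- The hom relation on `Ω𝓜 ∗ 𝓜` identifying morphisms whose difference factors
through an object of `𝓜`; its quotient is `(Ω𝓜 ∗ 𝓜)/𝓜`. -/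
def starLRel : HomRel (Subcat (OmegaStar T 𝓜)) :=
  fun {X Y} (f g : X ⟶ Y) =>
    FactorsThru 𝓜 (X := X.obj) (Y := Y.obj) (f - g).hom

section Stmt14Aux

variable {T} {𝓜}

lemma LT.tri_comp_zero {X Y Z : C} {x : T.loop.obj Z ⟶ X} {y : X ⟶ Y} {z : Y ⟶ Z}
    (h : T.IsTri x y z) : x ≫ y = 0 := by
  obtain ⟨f, hf1, hf2⟩ := T.ltr3 x y z (0 : T.loop.obj (0 : C) ⟶ Y) (𝟙 Y)
    (0 : Y ⟶ (0 : C)) (𝟙 Y) (0 : Z ⟶ (0 : C)) h (T.ltr1_id Y) (by simp)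
  simp only [Category.comp_id] at hf2
  rw [← hf2] at hf1
  simpa using hf1

lemma LT.weak_kernel {W X Y Z : C} {x : T.loop.obj Z ⟶ X} {y : X ⟶ Y} {z : Y ⟶ Z}
    (h : T.IsTri x y z) (t : W ⟶ X) (ht : t ≫ y = 0) :
    ∃ s : W ⟶ T.loop.obj Z, s ≫ x = t := by
  obtain ⟨f, _, hf2⟩ := T.ltr3 (0 : T.loop.obj (0 : C) ⟶ W) (𝟙 W) (0 : W ⟶ (0 : C))
    (-T.loop.map z) x y t (0 : (0 : C) ⟶ Y) (T.ltr1_id W) (T.ltr2 x y z h)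
    (by simp [ht])
  exact ⟨f, by simpa using hf2.symm⟩

lemma LT.loop_comp_zero {X Y Z : C} {x : T.loop.obj Z ⟶ X} {y : X ⟶ Y} {z : Y ⟶ Z}
    (h : T.IsTri x y z) : T.loop.map z ≫ x = 0 := by
  have := LT.tri_comp_zero (T.ltr2 x y z h)
  simpa using this

lemma LT.pres_surj
    (rigid : ∀ ⦃m m' : C⦄, m ∈ 𝓜 → m' ∈ 𝓜 → ∀ φ : T.loop.obj m ⟶ m', φ = 0)
    (LC1 : ∀ ⦃m m' : C⦄, m ∈ 𝓜 → m' ∈ 𝓜 →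
      Function.Bijective (fun φ : m ⟶ m' => T.loop.map φ))
    {M0 M1 X : C} (hM0 : M0 ∈ 𝓜) (hM1 : M1 ∈ 𝓜)
    {f : T.loop.obj M1 ⟶ X} {g : X ⟶ M0} {h : M0 ⟶ M1} (htri : T.IsTri f g h)
    {m : C} (hm : m ∈ 𝓜) (φ : T.loop.obj m ⟶ X) :
    ∃ a : m ⟶ M1, T.loop.map a ≫ f = φ := by
  obtain ⟨s, hs⟩ := LT.weak_kernel htri φ (rigid hm hM0 _)
  obtain ⟨a, ha⟩ := (LC1 hm hM1).2 s
  refine ⟨a, ?_⟩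
  dsimp at ha
  rw [ha, hs]

lemma LT.pres_ker
    (LC1 : ∀ ⦃m m' : C⦄, m ∈ 𝓜 → m' ∈ 𝓜 →
      Function.Bijective (fun φ : m ⟶ m' => T.loop.map φ))
    {M0 M1 X : C} (hM0 : M0 ∈ 𝓜) (hM1 : M1 ∈ 𝓜)
    {f : T.loop.obj M1 ⟶ X} {g : X ⟶ M0} {h : M0 ⟶ M1} (htri : T.IsTri f g h)
    {m : C} (hm : m ∈ 𝓜) (a : m ⟶ M1) :
    T.loop.map a ≫ f = 0 ↔ ∃ b : m ⟶ M0, b ≫ h = a := by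
  haveI := T.loop_additive
  constructor
  · intro h0
    obtain ⟨s, hs⟩ := LT.weak_kernel (T.ltr2 f g h htri) (T.loop.map a) h0
    obtain ⟨b, hb⟩ := (LC1 hm hM0).2 s
    dsimp at hb
    refine ⟨-b, (LC1 hm hM1).1 ?_⟩
    show T.loop.map ((-b) ≫ h) = T.loop.map a
    calc T.loop.map ((-b) ≫ h) = T.loop.map b ≫ (-T.loop.map h) := by
            rw [Functor.map_comp, Functor.map_neg, Preadditive.neg_comp,
              ← Preadditive.comp_neg]
      _ = T.loop.map a := by rw [hb]; exact hs
  · rintro ⟨b, rfl⟩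
    rw [Functor.map_comp, Category.assoc, LT.loop_comp_zero htri, comp_zero]

lemma LT.obj_additive (X : C) : ((loopResYoneda T 𝓜).obj X).Additive := by
  haveI := T.loop_additive
  have : ((ObjectProperty.ι (fun X : C => X ∈ 𝓜) ⋙ T.loop).op ⋙
      preadditiveYoneda.obj X).Additive := inferInstance
  exact this

/-- The presentation natural transformation, with source the preadditive Yoneda
functor of the subcategory. -/
def LT.pres {M1 X : C} (hM1 : M1 ∈ 𝓜) (f : T.loop.obj M1 ⟶ X) :
    preadditiveYoneda.obj (⟨M1, hM1⟩ : Subcat 𝓜) ⟶ (loopResYoneda T 𝓜).obj X where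
  app m := AddCommGrpCat.ofHom
    (AddMonoidHom.mk' (fun (a : m.unop ⟶ (⟨M1, hM1⟩ : Subcat 𝓜)) =>
        (T.loop.map a.hom ≫ f : T.loop.obj m.unop.obj ⟶ X))
      (by
        haveI := T.loop_additive
        intro (a : m.unop ⟶ (⟨M1, hM1⟩ : Subcat 𝓜)) (b : m.unop ⟶ (⟨M1, hM1⟩ : Subcat 𝓜))
        show T.loop.map (a.hom + b.hom) ≫ f = T.loop.map a.hom ≫ f + T.loop.map b.hom ≫ f
        rw [Functor.map_add, Preadditive.add_comp]))
  naturality := by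
    intro m m' φ
    ext a
    change m.unop ⟶ (⟨M1, hM1⟩ : Subcat 𝓜) at a
    show T.loop.map (φ.unop.hom ≫ a.hom) ≫ f =
      T.loop.map φ.unop.hom ≫ T.loop.map a.hom ≫ f
    rw [Functor.map_comp, Category.assoc]

lemma LT.finpres
    (rigid : ∀ ⦃m m' : C⦄, m ∈ 𝓜 → m' ∈ 𝓜 → ∀ φ : T.loop.obj m ⟶ m', φ = 0)
    (LC1 : ∀ ⦃m m' : C⦄, m ∈ 𝓜 → m' ∈ 𝓜 →
      Function.Bijective (fun φ : m ⟶ m' => T.loop.map φ))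
    {X : C} (hX : X ∈ OmegaStar T 𝓜) : FinPres ((loopResYoneda T 𝓜).obj X) := by
  obtain ⟨M0, M1, hM0, hM1, f, g, h, htri⟩ := hX
  refine ⟨⟨M0, hM0⟩, ⟨M1, hM1⟩, ObjectProperty.homMk h, LT.pres hM1 f, ?_, ?_⟩
  · intro m φ
    obtain ⟨a, ha⟩ := LT.pres_surj rigid LC1 hM0 hM1 htri m.property φ
    exact ⟨ObjectProperty.homMk a, ha⟩
  · intro m x
    refine (LT.pres_ker LC1 hM0 hM1 htri m.property x.hom).trans ⟨?_, ?_⟩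
    · rintro ⟨b, hb⟩
      exact ⟨ObjectProperty.homMk b, InducedCategory.hom_ext hb⟩
    · rintro ⟨y, rfl⟩
      exact ⟨y.hom, rfl⟩

lemma LT.natapp {D : Type*} [Category D] {F G : D ⥤ AddCommGrpCat.{v}} (α : F ⟶ G)
    {m m' : D} (ν : m ⟶ m') (x : F.obj m) :
    α.app m' (F.map ν x) = G.map ν (α.app m x) := by
  rw [← comp_apply, ← comp_apply, α.naturality]

/-- The functor from `Ω𝓜 ∗ 𝓜` to `mod 𝓜`. -/
def LT.E0
    (rigid : ∀ ⦃m m' : C⦄, m ∈ 𝓜 → m' ∈ 𝓜 → ∀ φ : T.loop.obj m ⟶ m', φ = 0)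
    (LC1 : ∀ ⦃m m' : C⦄, m ∈ 𝓜 → m' ∈ 𝓜 →
      Function.Bijective (fun φ : m ⟶ m' => T.loop.map φ)) :
    Subcat (OmegaStar T 𝓜) ⥤ ModCat (Subcat 𝓜) :=
  ObjectProperty.lift _
    (ObjectProperty.ι (fun X : C => X ∈ OmegaStar T 𝓜) ⋙ loopResYoneda T 𝓜)
    (fun X => ⟨LT.obj_additive X.obj, LT.finpres rigid LC1 X.property⟩)

lemma LT.E0_compat
    (rigid : ∀ ⦃m m' : C⦄, m ∈ 𝓜 → m' ∈ 𝓜 → ∀ φ : T.loop.obj m ⟶ m', φ = 0)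
    (LC1 : ∀ ⦃m m' : C⦄, m ∈ 𝓜 → m' ∈ 𝓜 →
      Function.Bijective (fun φ : m ⟶ m' => T.loop.map φ))
    {X Y : Subcat (OmegaStar T 𝓜)} (t t' : X ⟶ Y) (hrel : starLRel T 𝓜 t t') :
    (LT.E0 rigid LC1).map t = (LT.E0 rigid LC1).map t' := by
  obtain ⟨Z, hZ, u, v, huv⟩ := hrel
  suffices hsuf : (loopResYoneda T 𝓜).map t.hom =
      (loopResYoneda T 𝓜).map t'.hom from InducedCategory.hom_ext hsuf
  ext m φ
  change T.loop.obj m.unop.obj ⟶ X.obj at φ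
  show φ ≫ t.hom = φ ≫ t'.hom
  have hz : (φ ≫ u : T.loop.obj m.unop.obj ⟶ Z) = 0 := rigid m.unop.property hZ _
  have h0 : φ ≫ (t - t').hom = 0 := by
    rw [← huv, ← Category.assoc, hz, zero_comp]
  rw [show (t - t').hom = t.hom - t'.hom from rfl, Preadditive.comp_sub, sub_eq_zero] at h0
  exact h0

lemma LT.E0_full
    (rigid : ∀ ⦃m m' : C⦄, m ∈ 𝓜 → m' ∈ 𝓜 → ∀ φ : T.loop.obj m ⟶ m', φ = 0)
    (LC1 : ∀ ⦃m m' : C⦄, m ∈ 𝓜 → m' ∈ 𝓜 →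
      Function.Bijective (fun φ : m ⟶ m' => T.loop.map φ))
    (X Y : Subcat (OmegaStar T 𝓜))
    (α : (loopResYoneda T 𝓜).obj X.obj ⟶ (loopResYoneda T 𝓜).obj Y.obj) :
    ∃ t : X.obj ⟶ Y.obj, ∀ (m : Subcat 𝓜) (φ : T.loop.obj m.obj ⟶ X.obj),
      α.app (op m) φ = φ ≫ t := by
  obtain ⟨M0, M1, hM0, hM1, f, g, h, htri⟩ := X.property
  obtain ⟨N0, N1, hN0, hN1, f', g', h', htri'⟩ := Y.property
  have hnat : ∀ (m m₁ : Subcat 𝓜) (w : m.obj ⟶ m₁.obj) (φ : T.loop.obj m₁.obj ⟶ X.obj),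
      α.app (op m) (T.loop.map w ≫ φ) = T.loop.map w ≫ α.app (op m₁) φ :=
    fun m m₁ w φ => LT.natapp α (ObjectProperty.homMk w).op φ
  have hu : (α.app (op ⟨M1, hM1⟩) f : T.loop.obj M1 ⟶ Y.obj) ≫ g' = 0 :=
    rigid hM1 hN0 _
  obtain ⟨vv, hv⟩ := LT.weak_kernel htri' _ hu
  obtain ⟨w, hw⟩ := (LC1 hM1 hN1).2 vv
  dsimp at hw
  have hhf : T.loop.map h ≫ f = 0 := LT.loop_comp_zero htri
  have hcomp : T.loop.map (h ≫ w) ≫ f' = 0 := by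
    rw [Functor.map_comp, Category.assoc, hw, hv]
    rw [← hnat ⟨M0, hM0⟩ ⟨M1, hM1⟩ h f, hhf]
    exact map_zero _
  obtain ⟨s, hsh⟩ := (LT.pres_ker LC1 hN0 hN1 htri' hM0 (h ≫ w)).mp hcomp
  obtain ⟨t, ht1, ht2⟩ := T.ltr3 f g h f' g' h' s w htri htri' hsh.symm
  refine ⟨t, ?_⟩
  intro m φ
  obtain ⟨c, hc⟩ := LT.pres_surj rigid LC1 hM0 hM1 htri m.property φ
  rw [← hc, hnat m ⟨M1, hM1⟩ c f]
  have : f ≫ t = α.app (op ⟨M1, hM1⟩) f := by rw [ht1, hw, hv]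
  rw [Category.assoc, this]

lemma LT.iso_of_pres
    (rigid : ∀ ⦃m m' : C⦄, m ∈ 𝓜 → m' ∈ 𝓜 → ∀ φ : T.loop.obj m ⟶ m', φ = 0)
    (LC1 : ∀ ⦃m m' : C⦄, m ∈ 𝓜 → m' ∈ 𝓜 →
      Function.Bijective (fun φ : m ⟶ m' => T.loop.map φ))
    (F : (Subcat 𝓜)ᵒᵖ ⥤ AddCommGrpCat.{v}) (hF : FinPres F) :
    ∃ X ∈ OmegaStar T 𝓜, Nonempty ((loopResYoneda T 𝓜).obj X ≅ F) := by
  obtain ⟨A, B, h, π, hsurj, hker⟩ := hF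
  obtain ⟨X, f, g, htri⟩ := T.ltr1_ex h.hom
  refine ⟨X, ⟨A.obj, B.obj, A.property, B.property, f, g, h.hom, htri⟩, ⟨?_⟩⟩
  haveI := T.loop_additive
  have psurj : ∀ (m : Subcat 𝓜) (φ : T.loop.obj m.obj ⟶ X),
      ∃ a : m.obj ⟶ B.obj, T.loop.map a ≫ f = φ :=
    fun m φ => LT.pres_surj rigid LC1 A.property B.property htri m.property φ
  -- key2 : equal images under the triangle presentation give equal values of π
  have key2 : ∀ (m : Subcat 𝓜) (a a' : m ⟶ B),
      T.loop.map a.hom ≫ f = T.loop.map a'.hom ≫ f →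
      π.app (op m) a = π.app (op m) a' := by
    intro m a a' hh
    have hsub : T.loop.map (a - a').hom ≫ f = 0 := by
      rw [show (a - a').hom = a.hom - a'.hom from rfl,
        Functor.map_sub, Preadditive.sub_comp, hh, sub_self]
    obtain ⟨b, hb⟩ := (LT.pres_ker LC1 A.property B.property htri m.property
      (a - a').hom).mp hsub
    have h0 : π.app (op m) a - π.app (op m) a' = 0 := by
      refine (map_sub (ConcreteCategory.hom (π.app (op m))) a a').symm.trans ?_
      exact (hker m (a - a')).mpr ⟨ObjectProperty.homMk b, InducedCategory.hom_ext hb⟩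
    exact sub_eq_zero.mp h0
  -- key1 : equal values of π give equal images under the triangle presentation
  have key1 : ∀ (m : Subcat 𝓜) (a a' : m ⟶ B),
      π.app (op m) a = π.app (op m) a' →
      T.loop.map a.hom ≫ f = T.loop.map a'.hom ≫ f := by
    intro m a a' hh
    have h0 : π.app (op m) (a - a') = 0 :=
      (map_sub (ConcreteCategory.hom (π.app (op m))) a a').trans (sub_eq_zero.mpr hh)
    obtain ⟨y, hy⟩ := (hker m (a - a')).mp h0
    have hsub : T.loop.map (a - a').hom ≫ f = 0 :=
      (LT.pres_ker LC1 A.property B.property htri m.property (a - a').hom).mpr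
        ⟨y.hom, congrArg (fun q => q.hom) hy⟩
    rw [show (a - a').hom = a.hom - a'.hom from rfl, Functor.map_sub, Preadditive.sub_comp, sub_eq_zero] at hsub
    exact hsub
  -- the components of the isomorphism
  refine NatIso.ofComponents (fun m => ?_) ?_
  · refine
      { hom := AddCommGrpCat.ofHom (AddMonoidHom.mk'
          (fun φ => π.app (op m.unop) (ObjectProperty.homMk (psurj m.unop φ).choose)) ?_)
        inv := AddCommGrpCat.ofHom (AddMonoidHom.mk'
          (fun x => T.loop.map (hsurj m.unop x).choose.hom ≫ f) ?_)
        hom_inv_id := ?_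
        inv_hom_id := ?_ }
    · -- additivity of hom
      intro φ ψ
      have hadd := map_add (ConcreteCategory.hom (π.app (op m.unop)))
        (ObjectProperty.homMk (psurj m.unop φ).choose)
        (ObjectProperty.homMk (psurj m.unop ψ).choose)
      refine (key2 m.unop _ (ObjectProperty.homMk (psurj m.unop φ).choose +
        ObjectProperty.homMk (psurj m.unop ψ).choose) ?_).trans hadd
      show T.loop.map (psurj m.unop (φ + ψ : T.loop.obj m.unop.obj ⟶ X)).choose ≫ f =
        T.loop.map ((psurj m.unop φ).choose + (psurj m.unop ψ).choose) ≫ f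
      rw [(psurj m.unop (φ + ψ)).choose_spec, Functor.map_add, Preadditive.add_comp,
        (psurj m.unop φ).choose_spec, (psurj m.unop ψ).choose_spec]
      rfl
    · -- additivity of inv
      intro x y
      show T.loop.map (hsurj m.unop (x + y)).choose.hom ≫ f =
        T.loop.map (hsurj m.unop x).choose.hom ≫ f +
          T.loop.map (hsurj m.unop y).choose.hom ≫ f
      have := key1 m.unop (hsurj m.unop (x + y)).choose
        ((hsurj m.unop x).choose + (hsurj m.unop y).choose) ?_
      · rw [this, show ((hsurj m.unop x).choose + (hsurj m.unop y).choose).hom =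
          (hsurj m.unop x).choose.hom + (hsurj m.unop y).choose.hom from rfl,
          Functor.map_add, Preadditive.add_comp]
      · rw [map_add, (hsurj m.unop (x + y)).choose_spec, (hsurj m.unop x).choose_spec,
          (hsurj m.unop y).choose_spec]
    · -- hom_inv_id
      ext φ
      show T.loop.map (hsurj m.unop (π.app (op m.unop)
          (ObjectProperty.homMk (psurj m.unop φ).choose))).choose.hom ≫ f = φ
      rw [key1 m.unop _ _ (hsurj m.unop (π.app (op m.unop)
        (ObjectProperty.homMk (psurj m.unop φ).choose))).choose_spec]
      exact (psurj m.unop φ).choose_spec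
    · -- inv_hom_id
      ext x
      show π.app (op m.unop) (ObjectProperty.homMk
          (psurj m.unop (T.loop.map (hsurj m.unop x).choose.hom ≫ f)).choose) = x
      refine (key2 m.unop _ (hsurj m.unop x).choose ?_).trans (hsurj m.unop x).choose_spec
      exact (psurj m.unop (T.loop.map (hsurj m.unop x).choose.hom ≫ f)).choose_spec
  · -- naturality
    intro m m' ν
    ext φ
    show π.app (op m'.unop) (ObjectProperty.homMk
        (psurj m'.unop (T.loop.map ν.unop.hom ≫ φ)).choose) =
      F.map ν (π.app (op m.unop) (ObjectProperty.homMk (psurj m.unop φ).choose))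
    rw [key2 m'.unop _ (ν.unop ≫ ObjectProperty.homMk (psurj m.unop φ).choose) ?_]
    · exact LT.natapp π ν (ObjectProperty.homMk (psurj m.unop φ).choose)
    · show T.loop.map (psurj m'.unop (T.loop.map ν.unop.hom ≫ φ)).choose ≫ f =
        T.loop.map (ν.unop.hom ≫ (psurj m.unop φ).choose) ≫ f
      rw [(psurj m'.unop _).choose_spec, Functor.map_comp, Category.assoc,
        (psurj m.unop φ).choose_spec]

end Stmt14Aux

/-- Let `C` be a left triangulated category and `𝓜` a rigid
subcategory satisfying (LC1) and (LC2).  Then `X ↦ Hom_C(Ω(−),X)|_𝓜` induces an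
equivalence `(Ω𝓜 ∗ 𝓜)/𝓜 ≌ mod 𝓜`. -/
theorem stmt14
    (rigid : ∀ ⦃m m' : C⦄, m ∈ 𝓜 → m' ∈ 𝓜 → ∀ φ : T.loop.obj m ⟶ m', φ = 0)
    (LC1 : ∀ ⦃m m' : C⦄, m ∈ 𝓜 → m' ∈ 𝓜 →
      Function.Bijective (fun φ : m ⟶ m' => T.loop.map φ))
    (LC2 : ∀ ⦃X M0 M1 : C⦄, M0 ∈ 𝓜 → M1 ∈ 𝓜 →
      ∀ (f : T.loop.obj M1 ⟶ X) (g : X ⟶ M0) (h : M0 ⟶ M1), T.IsTri f g h →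
      ∀ ⦃Y : C⦄, Y ∈ OmegaStar T 𝓜 → ∀ t : X ⟶ Y, f ≫ t = 0 →
        ∃ s : M0 ⟶ Y, g ≫ s = t) :
    ∃ E : CategoryTheory.Quotient (starLRel T 𝓜) ⥤ ModCat (Subcat 𝓜),
      E.IsEquivalence ∧
      Nonempty (Quotient.functor (starLRel T 𝓜) ⋙ E ⋙ ObjectProperty.ι _ ≅
        ObjectProperty.ι _ ⋙ loopResYoneda T 𝓜) := by
  classical
  refine ⟨CategoryTheory.Quotient.lift _ (LT.E0 rigid LC1)
    (fun X Y t t' hrel => LT.E0_compat rigid LC1 t t' hrel), ⟨?_, ?_, ?_⟩, ⟨?_⟩⟩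
  · -- faithful
    refine ⟨fun {X' Y'} {a b} hab => ?_⟩
    obtain ⟨t, ht⟩ := (Quotient.functor (starLRel T 𝓜)).map_surjective
      (X := X'.as) (Y := Y'.as) a
    obtain ⟨t', ht'⟩ := (Quotient.functor (starLRel T 𝓜)).map_surjective
      (X := X'.as) (Y := Y'.as) b
    rw [← ht, ← ht'] at hab ⊢
    have hEq : (loopResYoneda T 𝓜).map t.hom =
        (loopResYoneda T 𝓜).map t'.hom := congrArg (fun q => q.hom) hab
    obtain ⟨M0, M1, hM0, hM1, f, g, h, htri⟩ := X'.as.property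
    have h3 : f ≫ t.hom = f ≫ t'.hom := by
      have h2 := congrArg
        (fun p : (loopResYoneda T 𝓜).obj X'.as.obj ⟶ (loopResYoneda T 𝓜).obj Y'.as.obj
          => p.app (op ⟨M1, hM1⟩)) hEq
      exact ConcreteCategory.congr_hom h2 f
    have h4 : f ≫ (t.hom - t'.hom) = 0 := by
      rw [Preadditive.comp_sub, h3, sub_self]
    obtain ⟨s, hs⟩ := LC2 hM0 hM1 f g h htri Y'.as.property _ h4
    exact CategoryTheory.Quotient.sound _ ⟨M0, hM0, g, s, hs⟩
  · -- full
    refine ⟨fun {X' Y'} α => ?_⟩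
    obtain ⟨t, hT⟩ := LT.E0_full rigid LC1 X'.as Y'.as α.hom
    refine ⟨(Quotient.functor _).map (ObjectProperty.homMk t), ?_⟩
    suffices hsuf : ((loopResYoneda T 𝓜).map t :
        (loopResYoneda T 𝓜).obj X'.as.obj ⟶ (loopResYoneda T 𝓜).obj Y'.as.obj) = α.hom
      from InducedCategory.hom_ext hsuf
    ext m φ
    exact (hT m.unop φ).symm
  · -- essentially surjective
    refine ⟨fun F' => ?_⟩
    obtain ⟨X, hX, ⟨θ⟩⟩ := LT.iso_of_pres rigid LC1 F'.obj F'.property.2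
    exact ⟨(Quotient.functor _).obj ⟨X, hX⟩, ⟨ObjectProperty.isoMk _ θ⟩⟩
  · -- the natural isomorphism
    exact Iso.refl _
end
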